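/- For every integer n ≥ 3, the fractional local dimension of the standard example S_n satisfies fldim(S_n) < 3. -/

import Mathlib

noncomputable section

/-- A partial linear extension (ple) of a poset, encoded as a list of distinct elements:
the list order is the linear order, and it must extend the poset order on its members. -/
def IsPLE (α : Type*) [PartialOrder α] [DecidableEq α] (l : List α) : Prop :=
  l.Nodup ∧ ∀ x ∈ l, ∀ y ∈ l, x < y → l.idxOf x < l.idxOf y

/-- `u ≤ v` in the ple `l`. -/
def pleLE {α : Type*} [DecidableEq α] (l : List α) (u v : α) : Prop :=
  u ∈ l ∧ v ∈ l ∧ l.idxOf u ≤ l.idxOf v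

/-- `u < v` in the ple `l`. -/
def pleLT {α : Type*} [DecidableEq α] (l : List α) (u v : α) : Prop :=
  u ∈ l ∧ v ∈ l ∧ l.idxOf u < l.idxOf v

/-- A local weight function: assigns to each ple of the poset a weight in [0,1]. -/
structure LocalWeight (α : Type*) [PartialOrder α] [DecidableEq α] where
  w : List α → ℝ
  nonneg : ∀ l, 0 ≤ w l
  le_one : ∀ l, w l ≤ 1
  supp : ∀ l, ¬ IsPLE α l → w l = 0

/-- local measure μ(u,w): total weight of ple's containing `u`. -/
def localMeasure {α : Type*} [PartialOrder α] [DecidableEq α] (W : LocalWeight α) (u : α) : ℝ :=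
  ∑ᶠ l ∈ {l : List α | IsPLE α l ∧ u ∈ l}, W.w l

/-- μ(P,w): the maximum local measure over elements of the poset. -/
def maxLocalMeasure {α : Type*} [PartialOrder α] [DecidableEq α] [Fintype α]
    (W : LocalWeight α) : ℝ :=
  ⨆ u : α, localMeasure W u

/-- A fractional local realizer. -/
def IsFLRealizer {α : Type*} [PartialOrder α] [DecidableEq α] (W : LocalWeight α) : Prop :=
  (∀ u v : α, u ≤ v →
    1 ≤ ∑ᶠ l ∈ {l : List α | IsPLE α l ∧ pleLE l u v}, W.w l) ∧
  (∀ u v : α, ¬ u ≤ v → ¬ v ≤ u →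
    1 ≤ ∑ᶠ l ∈ {l : List α | IsPLE α l ∧ pleLT l v u}, W.w l)

/-- The fractional local dimension of a finite poset. -/
def fldim (α : Type*) [PartialOrder α] [DecidableEq α] [Fintype α] : ℝ :=
  sInf {c : ℝ | ∃ W : LocalWeight α, IsFLRealizer W ∧ maxLocalMeasure W = c}

/-- The poset P(1,d;n): all 1-element and d-element subsets of {1,…,n}, ordered by inclusion. -/
abbrev PosetOneDN (d n : ℕ) := {S : Finset (Fin n) // S.card = 1 ∨ S.card = d}

/-- fldim(1,d;n). -/
def fldim1dn (d n : ℕ) : ℝ := fldim (PosetOneDN d n)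

end

/-- The standard example S_n: minimal elements a_i = inl i, maximal elements b_j = inr j,
with a_i < b_j iff i ≠ j. -/
def StdEx (n : ℕ) : Type := Sum (Fin n) (Fin n)

/-- The order relation of the standard example. -/
def StdEx.le {n : ℕ} : StdEx n → StdEx n → Prop
  | Sum.inl i, Sum.inl j => i = j
  | Sum.inl i, Sum.inr j => i ≠ j
  | Sum.inr i, Sum.inr j => i = j
  | Sum.inr _, Sum.inl _ => False

instance (n : ℕ) : PartialOrder (StdEx n) where
  le := StdEx.le
  le_refl a := by cases a <;> simp [StdEx.le]
  le_trans a b c hab hbc := by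
    cases a <;> cases b <;> cases c <;> simp_all [StdEx.le]
  le_antisymm a b hab hba := by
    cases a <;> cases b <;> simp_all [StdEx.le] <;> rfl

instance (n : ℕ) : Fintype (StdEx n) :=
  inferInstanceAs (Fintype (Sum (Fin n) (Fin n)))

instance (n : ℕ) : DecidableEq (StdEx n) :=
  inferInstanceAs (DecidableEq (Sum (Fin n) (Fin n)))

namespace FLDaux
open List

section generic
variable {α : Type*} [DecidableEq α]

theorem idx_lt_cross {l₁ l₂ : List α} {x y : α} (hx : x ∈ l₁) (hy : y ∉ l₁) :
    (l₁ ++ l₂).idxOf x < (l₁ ++ l₂).idxOf y := by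
  rw [idxOf_append_of_mem hx, idxOf_append_of_notMem hy]
  exact lt_of_lt_of_le (idxOf_lt_length_iff.2 hx) (Nat.le_add_right _ _)

theorem idx_lt_left {l₁ l₂ : List α} {x y : α} (hx : x ∈ l₁) (hy : y ∈ l₁)
    (h : l₁.idxOf x < l₁.idxOf y) :
    (l₁ ++ l₂).idxOf x < (l₁ ++ l₂).idxOf y := by
  rw [idxOf_append_of_mem hx, idxOf_append_of_mem hy]; exact h

theorem idx_lt_right {l₁ l₂ : List α} {x y : α} (hx : x ∉ l₁) (hy : y ∉ l₁)
    (h : l₂.idxOf x < l₂.idxOf y) :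
    (l₁ ++ l₂).idxOf x < (l₁ ++ l₂).idxOf y := by
  rw [idxOf_append_of_notMem hx, idxOf_append_of_notMem hy]; omega

theorem idx_map_inj {β : Type*} [DecidableEq β] {f : α → β} (hf : Function.Injective f)
    (l : List α) (x : α) : (l.map f).idxOf (f x) = l.idxOf x := by
  induction l with
  | nil => rfl
  | cons a t ih =>
    by_cases h : x = a
    · subst h; simp [idxOf_cons_self]
    · rw [map_cons, idxOf_cons_ne _ (by simpa using fun hc => h (hf hc).symm),
        idxOf_cons_ne _ (by exact fun hc => h hc.symm), ih]

theorem idx_lt_of_pairwise {R : α → α → Prop} (hR : ∀ p q, R p q → R q p → False) :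
    ∀ {l : List α}, l.Pairwise R → ∀ {x y}, x ∈ l → y ∈ l → R x y →
      l.idxOf x < l.idxOf y := by
  intro l
  induction l with
  | nil => intro _ x y hx; simp at hx
  | cons a t ih =>
    intro hp x y hx hy hxy
    rcases pairwise_cons.1 hp with ⟨ha, ht⟩
    by_cases hxa : x = a
    · subst hxa
      have hyx : y ≠ x := fun h => hR _ _ hxy (h ▸ hxy)
      rw [idxOf_cons_self, idxOf_cons_ne _ (fun h => hyx h.symm)]
      omega
    · have hxt : x ∈ t := by rcases mem_cons.1 hx with h | h; exact absurd h hxa; exact h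
      have hya : y ≠ a := by rintro rfl; exact hR _ _ hxy (ha x hxt)
      have hyt : y ∈ t := by rcases mem_cons.1 hy with h | h; exact absurd h hya; exact h
      rw [idxOf_cons_ne _ (fun h => hxa h.symm), idxOf_cons_ne _ (fun h => hya h.symm)]
      exact Nat.succ_lt_succ (ih ht hxt hyt hxy)

end generic


variable {n : ℕ}

def av (i : Fin n) : StdEx n := Sum.inl i
def bv (i : Fin n) : StdEx n := Sum.inr i

theorem le_inl_inl {i j : Fin n} : av i ≤ av j ↔ i = j := Iff.rfl
theorem le_inl_inr {i j : Fin n} : av i ≤ bv j ↔ i ≠ j := Iff.rfl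
theorem le_inr_inr {i j : Fin n} : bv i ≤ bv j ↔ i = j := Iff.rfl
theorem le_inr_inl {i j : Fin n} : bv i ≤ av j ↔ False := Iff.rfl

theorem av_injective : Function.Injective (av (n := n)) := fun _ _ h => Sum.inl.inj h
theorem bv_injective : Function.Injective (bv (n := n)) := fun _ _ h => Sum.inr.inj h

theorem lt_char {x y : StdEx n} (h : x < y) :
    ∃ i j, x = av i ∧ y = bv j ∧ i ≠ j := by
  rcases lt_iff_le_not_ge.1 h with ⟨hle, hnle⟩
  cases x with
  | inl i =>
    cases y with
    | inl j =>
      exact absurd (le_inl_inl (i := j) (j := i) |>.2 (le_inl_inl.1 hle).symm) hnle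
    | inr j => exact ⟨i, j, rfl, rfl, le_inl_inr.1 hle⟩
  | inr i =>
    cases y with
    | inl j => exact absurd hle (fun hc => le_inr_inl.1 hc)
    | inr j =>
      exact absurd (le_inr_inr (i := j) (j := i) |>.2 (le_inr_inr.1 hle).symm) hnle


/-! ### The lists -/

def AL (n : ℕ) (i : Fin n) : List (Fin n) := (finRange n).erase i

def EL (n : ℕ) (i : Fin n) : List (StdEx n) :=
  (AL n i).map av ++ bv i :: av i :: (AL n i).map bv

def FmL (n : ℕ) : List (StdEx n) :=
  (finRange n).reverse.map av ++ (finRange n).reverse.map bv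

def SlL (n : ℕ) (i : Fin n) : List (StdEx n) := [bv i, av i]

theorem mem_AL {i j : Fin n} : j ∈ AL n i ↔ j ≠ i := by
  rw [AL, (nodup_finRange n).mem_erase_iff]; simp [mem_finRange]

theorem AL_nodup (i : Fin n) : (AL n i).Nodup := (nodup_finRange n).erase i

theorem AL_pairwise (i : Fin n) : (AL n i).Pairwise (· < ·) :=
  Pairwise.sublist (erase_sublist) (pairwise_lt_finRange n)

theorem AL_length (i : Fin n) : (AL n i).length = n - 1 := by
  rw [AL, length_erase_of_mem (mem_finRange i), length_finRange]

-- block membership simp facts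
theorem mem_mapav {x : StdEx n} {l : List (Fin n)} : x ∈ l.map av ↔ ∃ k ∈ l, x = av k := by
  simp [eq_comm]
theorem av_mem_mapav {k : Fin n} {l : List (Fin n)} : av k ∈ l.map av ↔ k ∈ l := by
  constructor
  · intro h; rcases mem_map.1 h with ⟨m, hm, he⟩; rwa [← av_injective he]
  · intro h; exact mem_map_of_mem h
theorem bv_mem_mapbv {k : Fin n} {l : List (Fin n)} : bv k ∈ l.map bv ↔ k ∈ l := by
  constructor
  · intro h; rcases mem_map.1 h with ⟨m, hm, he⟩; rwa [← bv_injective he]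
  · intro h; exact mem_map_of_mem h
theorem bv_not_mem_mapav {k : Fin n} {l : List (Fin n)} : bv k ∉ l.map av := by
  intro h; rcases mem_map.1 h with ⟨m, _, he⟩; exact Sum.inl_ne_inr he
theorem av_not_mem_mapbv {k : Fin n} {l : List (Fin n)} : av k ∉ l.map bv := by
  intro h; rcases mem_map.1 h with ⟨m, _, he⟩; exact Sum.inr_ne_inl he
theorem av_ne_bv {k m : Fin n} : av k ≠ bv m := fun h => Sum.inl_ne_inr h
theorem bv_ne_av {k m : Fin n} : bv k ≠ av m := fun h => Sum.inr_ne_inl h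

/-! ### membership in the lists -/

theorem mem_EL_av (i k : Fin n) : av k ∈ EL n i := by
  by_cases h : k = i
  · subst h; rw [EL]; exact mem_append_right _ (by simp)
  · exact mem_append_left _ (av_mem_mapav.2 (mem_AL.2 h))

theorem mem_EL_bv (i k : Fin n) : bv k ∈ EL n i := by
  by_cases h : k = i
  · subst h; rw [EL]; exact mem_append_right _ (by simp)
  · rw [EL]; refine mem_append_right _ ?_
    exact mem_cons_of_mem _ (mem_cons_of_mem _ (bv_mem_mapbv.2 (mem_AL.2 h)))

theorem mem_Fm_av (k : Fin n) : av k ∈ FmL n :=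
  mem_append_left _ (av_mem_mapav.2 (by simp [mem_finRange]))
theorem mem_Fm_bv (k : Fin n) : bv k ∈ FmL n :=
  mem_append_right _ (bv_mem_mapbv.2 (by simp [mem_finRange]))
theorem mem_Sl_av (i : Fin n) : av i ∈ SlL n i := by simp [SlL]
theorem mem_Sl_bv (i : Fin n) : bv i ∈ SlL n i := by simp [SlL]
theorem av_mem_Sl_iff {i k : Fin n} : av k ∈ SlL n i ↔ k = i := by
  simp only [SlL, mem_cons, mem_singleton, not_mem_nil, or_false]
  constructor
  · rintro (h | h); exact absurd h av_ne_bv; exact av_injective h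
  · rintro rfl; exact Or.inr rfl
theorem bv_mem_Sl_iff {i k : Fin n} : bv k ∈ SlL n i ↔ k = i := by
  simp only [SlL, mem_cons, mem_singleton, not_mem_nil, or_false]
  constructor
  · rintro (h | h); exact bv_injective h; exact absurd h bv_ne_av
  · rintro rfl; exact Or.inl rfl

/-! ### alternative decompositions of `EL` -/

theorem EL_eq2 (i : Fin n) :
    EL n i = ((AL n i).map av ++ [bv i]) ++ (av i :: (AL n i).map bv) := by
  simp [EL]

theorem EL_eq3 (i : Fin n) :
    EL n i = ((AL n i).map av ++ [bv i, av i]) ++ (AL n i).map bv := by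
  simp [EL]


/-! ### order facts inside the lists -/

theorem av_not_mem_A_self (i : Fin n) : av i ∉ (AL n i).map av := by
  intro h; exact (mem_AL.1 (av_mem_mapav.1 h)) rfl

theorem E_b_lt_a (i : Fin n) :
    (EL n i).idxOf (bv i) < (EL n i).idxOf (av i) := by
  rw [EL_eq2]
  refine idx_lt_cross (mem_append_right _ (by simp)) ?_
  intro h
  rcases mem_append.1 h with h | h
  · exact av_not_mem_A_self i h
  · exact av_ne_bv (by simpa using h)

theorem E_ak_bj {i k : Fin n} (hk : k ≠ i) (j : Fin n) :
    (EL n i).idxOf (av k) < (EL n i).idxOf (bv j) := by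
  rw [EL]
  exact idx_lt_cross (av_mem_mapav.2 (mem_AL.2 hk)) bv_not_mem_mapav

theorem E_ak_ai {i k : Fin n} (hk : k ≠ i) :
    (EL n i).idxOf (av k) < (EL n i).idxOf (av i) := by
  rw [EL_eq2]
  refine idx_lt_cross (mem_append_left _ (av_mem_mapav.2 (mem_AL.2 hk))) ?_
  intro h
  rcases mem_append.1 h with h | h
  · exact av_not_mem_A_self i h
  · exact av_ne_bv (by simpa using h)

theorem E_ai_bj {i j : Fin n} (hj : j ≠ i) :
    (EL n i).idxOf (av i) < (EL n i).idxOf (bv j) := by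
  rw [EL_eq3]
  refine idx_lt_cross (mem_append_right _ (by simp)) ?_
  intro h
  rcases mem_append.1 h with h | h
  · exact bv_not_mem_mapav h
  · rcases mem_cons.1 h with h | h
    · exact hj (bv_injective h)
    · exact bv_ne_av (by simpa using h)

theorem E_ak_aj {i k j : Fin n} (hk : k ≠ i) (hj : j ≠ i) (hkj : k < j) :
    (EL n i).idxOf (av k) < (EL n i).idxOf (av j) := by
  rw [EL]
  refine idx_lt_left (av_mem_mapav.2 (mem_AL.2 hk)) (av_mem_mapav.2 (mem_AL.2 hj)) ?_
  rw [idx_map_inj av_injective, idx_map_inj av_injective]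
  exact idx_lt_of_pairwise (fun p q h1 h2 => absurd h1 (not_lt.2 h2.le)) (AL_pairwise i)
    (mem_AL.2 hk) (mem_AL.2 hj) hkj

theorem E_bi_bj {i j : Fin n} (hj : j ≠ i) :
    (EL n i).idxOf (bv i) < (EL n i).idxOf (bv j) := by
  rw [EL_eq2]
  refine idx_lt_cross (mem_append_right _ (by simp)) ?_
  intro h
  rcases mem_append.1 h with h | h
  · exact bv_not_mem_mapav h
  · exact hj (bv_injective (by simpa using h))

theorem E_bk_bj {i k j : Fin n} (hk : k ≠ i) (hj : j ≠ i) (hkj : k < j) :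
    (EL n i).idxOf (bv k) < (EL n i).idxOf (bv j) := by
  rw [EL_eq3]
  have hnot : ∀ m : Fin n, m ≠ i → bv m ∉ (AL n i).map av ++ [bv i, av i] := by
    intro m hm h
    rcases mem_append.1 h with h | h
    · exact bv_not_mem_mapav h
    · rcases mem_cons.1 h with h | h
      · exact hm (bv_injective h)
      · exact bv_ne_av (by simpa using h)
  refine idx_lt_right (hnot k hk) (hnot j hj) ?_
  rw [idx_map_inj bv_injective, idx_map_inj bv_injective]
  exact idx_lt_of_pairwise (fun p q h1 h2 => absurd h1 (not_lt.2 h2.le)) (AL_pairwise i)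
    (mem_AL.2 hk) (mem_AL.2 hj) hkj

theorem revR_pairwise : ((finRange n).reverse).Pairwise (fun x y : Fin n => y < x) :=
  pairwise_reverse.2 (by simpa [flip] using pairwise_lt_finRange n)

theorem F_a_b (i j : Fin n) :
    (FmL n).idxOf (av i) < (FmL n).idxOf (bv j) := by
  rw [FmL]
  exact idx_lt_cross (av_mem_mapav.2 (by simp [mem_finRange])) bv_not_mem_mapav

theorem F_a_a {k j : Fin n} (h : j < k) :
    (FmL n).idxOf (av k) < (FmL n).idxOf (av j) := by
  rw [FmL]
  refine idx_lt_left (av_mem_mapav.2 (by simp [mem_finRange]))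
    (av_mem_mapav.2 (by simp [mem_finRange])) ?_
  rw [idx_map_inj av_injective, idx_map_inj av_injective]
  exact idx_lt_of_pairwise (fun p q h1 h2 => absurd h1 (not_lt.2 h2.le)) revR_pairwise
    (by simp [mem_finRange]) (by simp [mem_finRange]) h

theorem F_b_b {k j : Fin n} (h : j < k) :
    (FmL n).idxOf (bv k) < (FmL n).idxOf (bv j) := by
  rw [FmL]
  refine idx_lt_right bv_not_mem_mapav bv_not_mem_mapav ?_
  rw [idx_map_inj bv_injective, idx_map_inj bv_injective]
  exact idx_lt_of_pairwise (fun p q h1 h2 => absurd h1 (not_lt.2 h2.le)) revR_pairwise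
    (by simp [mem_finRange]) (by simp [mem_finRange]) h

theorem Sl_b_lt_a (i : Fin n) :
    (SlL n i).idxOf (bv i) < (SlL n i).idxOf (av i) := by
  rw [SlL, idxOf_cons_self, idxOf_cons_ne _ bv_ne_av]
  omega


/-! ### Nodup and IsPLE -/

theorem Sl_nodup (i : Fin n) : (SlL n i).Nodup := by
  simp [SlL, bv_ne_av]

theorem Fm_nodup : (FmL n).Nodup := by
  rw [FmL, nodup_append]
  refine ⟨(nodup_reverse.2 (nodup_finRange n)).map av_injective,
    (nodup_reverse.2 (nodup_finRange n)).map bv_injective, ?_⟩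
  intro x hx y hx2 hxy
  subst hxy
  rcases mem_map.1 hx with ⟨k, _, rfl⟩
  exact av_not_mem_mapbv hx2

theorem EL_nodup (i : Fin n) : (EL n i).Nodup := by
  rw [EL, nodup_append]
  refine ⟨(AL_nodup i).map av_injective, ?_, ?_⟩
  · rw [nodup_cons]
    constructor
    · intro h
      rcases mem_cons.1 h with h | h
      · exact bv_ne_av h
      · exact (mem_AL.1 (bv_mem_mapbv.1 h)) rfl
    · rw [nodup_cons]
      exact ⟨av_not_mem_mapbv, (AL_nodup i).map bv_injective⟩
  · intro x hx y hx2 hxy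
    subst hxy
    rcases mem_map.1 hx with ⟨k, hk, rfl⟩
    rcases mem_cons.1 hx2 with h | h
    · exact av_ne_bv h
    · rcases mem_cons.1 h with h | h
      · exact (mem_AL.1 hk) (av_injective h)
      · exact av_not_mem_mapbv h

theorem isPLE_Sl (i : Fin n) : IsPLE (StdEx n) (SlL n i) := by
  refine ⟨Sl_nodup i, ?_⟩
  intro x hx y hy hlt
  rcases lt_char hlt with ⟨i', j', rfl, rfl, hne⟩
  rw [av_mem_Sl_iff.1 hx] at hne
  rw [bv_mem_Sl_iff.1 hy] at hne
  exact absurd rfl hne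

theorem isPLE_Fm : IsPLE (StdEx n) (FmL n) := by
  refine ⟨Fm_nodup, ?_⟩
  intro x hx y hy hlt
  rcases lt_char hlt with ⟨i', j', rfl, rfl, hne⟩
  exact F_a_b i' j'

theorem isPLE_EL (i : Fin n) : IsPLE (StdEx n) (EL n i) := by
  refine ⟨EL_nodup i, ?_⟩
  intro x hx y hy hlt
  rcases lt_char hlt with ⟨i', j', rfl, rfl, hne⟩
  by_cases hii : i' = i
  · subst hii; exact E_ai_bj (fun h => hne h.symm)
  · exact E_ak_bj hii j'

/-! ### lengths and distinctness -/

theorem EL_length (i : Fin n) : (EL n i).length = 2 * n - 1 + 1 := by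
  have h1 : 1 ≤ n := Nat.one_le_iff_ne_zero.2 (by rintro rfl; exact Fin.elim0 i)
  simp [EL, AL_length]
  omega

theorem Fm_length : (FmL n).length = 2 * n := by
  simp [FmL]; omega

theorem Sl_ne_Fm (hn : 3 ≤ n) (i : Fin n) : SlL n i ≠ FmL n := by
  intro h
  have := congrArg List.length h
  rw [Fm_length] at this
  simp [SlL] at this
  omega

theorem Sl_ne_EL (hn : 3 ≤ n) (i j : Fin n) : SlL n i ≠ EL n j := by
  intro h
  have := congrArg List.length h
  rw [EL_length] at this
  simp [SlL] at this
  omega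

theorem EL_ne_Fm (i : Fin n) : EL n i ≠ FmL n := by
  intro h
  have h1 := E_b_lt_a i
  rw [h] at h1
  exact absurd (F_a_b i i) (by omega)

theorem Sl_inj : Function.Injective (SlL n) := by
  intro i j h
  simp only [SlL, cons.injEq] at h
  exact bv_injective h.1

theorem EL_inj : Function.Injective (EL n) := by
  intro i j h
  by_contra hne
  have h1 := E_b_lt_a i
  rw [h] at h1
  exact absurd (E_ak_bj (i := j) hne i) (by omega)


/-! ### the weight function -/

noncomputable def qv (n : ℕ) : ℝ := ((n : ℝ) - 1)⁻¹

theorem qv_pos (hn : 3 ≤ n) : 0 < qv n := by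
  have h3 : (3 : ℝ) ≤ (n : ℝ) := by exact_mod_cast hn
  rw [qv]
  have : (0:ℝ) < (n:ℝ) - 1 := by linarith
  positivity

theorem qv_le_one (hn : 3 ≤ n) : qv n ≤ 1 := by
  have : (3 : ℝ) ≤ (n : ℝ) := by exact_mod_cast hn
  rw [qv]
  rw [inv_le_one_iff₀]
  right; linarith

open Classical in
noncomputable def wf (n : ℕ) (l : List (StdEx n)) : ℝ :=
  if l = FmL n then 1 - qv n
  else if ∃ i, l = SlL n i then 1 - qv n
  else if ∃ i, l = EL n i then qv n
  else 0

theorem wf_nonneg (hn : 3 ≤ n) (l : List (StdEx n)) : 0 ≤ wf n l := by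
  rw [wf]
  have h1 := qv_pos hn
  have h2 := qv_le_one hn
  split_ifs <;> linarith

theorem wf_le_one (hn : 3 ≤ n) (l : List (StdEx n)) : wf n l ≤ 1 := by
  rw [wf]
  have h1 := qv_pos hn
  have h2 := qv_le_one hn
  split_ifs <;> linarith

theorem wf_supp (l : List (StdEx n)) (h : ¬ IsPLE (StdEx n) l) : wf n l = 0 := by
  rw [wf]
  split_ifs with h1 h2 h3
  · exact absurd (h1 ▸ isPLE_Fm) h
  · rcases h2 with ⟨i, rfl⟩; exact absurd (isPLE_Sl i) h
  · rcases h3 with ⟨i, rfl⟩; exact absurd (isPLE_EL i) h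
  · rfl

theorem wf_Fm : wf n (FmL n) = 1 - qv n := if_pos rfl

theorem wf_Sl (hn : 3 ≤ n) (i : Fin n) : wf n (SlL n i) = 1 - qv n := by
  rw [wf, if_neg (Sl_ne_Fm hn i), if_pos ⟨i, rfl⟩]

theorem wf_EL (hn : 3 ≤ n) (i : Fin n) : wf n (EL n i) = qv n := by
  rw [wf, if_neg (EL_ne_Fm i), if_neg, if_pos ⟨i, rfl⟩]
  rintro ⟨j, hj⟩
  exact Sl_ne_EL hn j i hj.symm

/-! ### the support finset and the master sum formula -/

def TF (n : ℕ) : Finset (List (StdEx n)) :=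
  insert (FmL n) ((Finset.univ.image (SlL n)) ∪ (Finset.univ.image (EL n)))

theorem support_wf_sub : Function.support (wf n) ⊆ ↑(TF n) := by
  intro l hl
  rw [Function.mem_support, wf] at hl
  rw [TF]
  simp only [Finset.coe_insert, Set.mem_insert_iff, Finset.coe_union, Set.mem_union,
    Finset.coe_image, Set.mem_image, Finset.coe_univ, Set.image_univ, Set.mem_range]
  split_ifs at hl with h1 h2 h3
  · exact Or.inl h1
  · rcases h2 with ⟨i, rfl⟩; exact Or.inr (Or.inl ⟨i, rfl⟩)
  · rcases h3 with ⟨i, rfl⟩; exact Or.inr (Or.inr ⟨i, rfl⟩)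
  · exact absurd rfl hl

theorem sum_formula (hn : 3 ≤ n) (s : Set (List (StdEx n))) :
    ∑ᶠ l ∈ s, wf n l =
      Set.indicator s (wf n) (FmL n)
      + (∑ i : Fin n, Set.indicator s (wf n) (SlL n i))
      + (∑ i : Fin n, Set.indicator s (wf n) (EL n i)) := by
  rw [finsum_mem_def]
  rw [finsum_eq_sum_of_support_subset _
    (subset_trans (fun x hx => by
      rw [Function.mem_support] at hx
      rw [Function.mem_support]
      intro h0
      apply hx
      by_cases hxs : x ∈ s
      · rw [Set.indicator_of_mem hxs]; exact h0
      · exact Set.indicator_of_notMem hxs _) support_wf_sub)]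
  have hFm_not : FmL n ∉ (Finset.univ.image (SlL n)) ∪ (Finset.univ.image (EL n)) := by
    simp only [Finset.mem_union, Finset.mem_image, Finset.mem_univ, true_and, not_or,
      not_exists]
    exact ⟨fun i => fun h => Sl_ne_Fm hn i h, fun i h => EL_ne_Fm i h⟩
  have hdisj : Disjoint (Finset.univ.image (SlL n)) (Finset.univ.image (EL n)) := by
    rw [Finset.disjoint_left]
    intro x hx hx2
    simp only [Finset.mem_image, Finset.mem_univ, true_and] at hx hx2
    rcases hx with ⟨i, rfl⟩
    rcases hx2 with ⟨j, hj⟩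
    exact Sl_ne_EL hn i j hj.symm
  rw [TF, Finset.sum_insert hFm_not, Finset.sum_union hdisj,
    Finset.sum_image (fun i _ j _ h => Sl_inj h),
    Finset.sum_image (fun i _ j _ h => EL_inj h)]
  ring


/-! ### bounds -/

theorem ind_nonneg (hn : 3 ≤ n) (s : Set (List (StdEx n))) (l : List (StdEx n)) :
    0 ≤ Set.indicator s (wf n) l :=
  Set.indicator_nonneg (fun l _ => wf_nonneg hn l) l

theorem ind_le (hn : 3 ≤ n) (s : Set (List (StdEx n))) (l : List (StdEx n)) :
    Set.indicator s (wf n) l ≤ wf n l := by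
  by_cases h : l ∈ s
  · rw [Set.indicator_of_mem h]
  · rw [Set.indicator_of_notMem h]; exact wf_nonneg hn l

theorem qmul (hn : 3 ≤ n) : ((n : ℝ) - 1) * qv n = 1 := by
  have h3 : (3 : ℝ) ≤ (n : ℝ) := by exact_mod_cast hn
  rw [qv, mul_inv_cancel₀]
  linarith

theorem bound1 (hn : 3 ≤ n) {s : Set (List (StdEx n))} (hFm : FmL n ∈ s)
    {i : Fin n} (hE : EL n i ∈ s) : 1 ≤ ∑ᶠ l ∈ s, wf n l := by
  rw [sum_formula hn]
  have h1 : Set.indicator s (wf n) (FmL n) = 1 - qv n := by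
    rw [Set.indicator_of_mem hFm, wf_Fm]
  have h2 : (0:ℝ) ≤ ∑ i : Fin n, Set.indicator s (wf n) (SlL n i) :=
    Finset.sum_nonneg (fun i _ => ind_nonneg hn s _)
  have h3 : qv n ≤ ∑ i : Fin n, Set.indicator s (wf n) (EL n i) := by
    have := Finset.single_le_sum (f := fun i => Set.indicator s (wf n) (EL n i))
      (fun i _ => ind_nonneg hn s _) (Finset.mem_univ i)
    rwa [Set.indicator_of_mem hE, wf_EL hn] at this
  linarith

theorem bound3 (hn : 3 ≤ n) {s : Set (List (StdEx n))} {i : Fin n}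
    (hSl : SlL n i ∈ s) (hE : EL n i ∈ s) : 1 ≤ ∑ᶠ l ∈ s, wf n l := by
  rw [sum_formula hn]
  have h1 : (0:ℝ) ≤ Set.indicator s (wf n) (FmL n) := ind_nonneg hn s _
  have h2 : 1 - qv n ≤ ∑ i : Fin n, Set.indicator s (wf n) (SlL n i) := by
    have := Finset.single_le_sum (f := fun i => Set.indicator s (wf n) (SlL n i))
      (fun i _ => ind_nonneg hn s _) (Finset.mem_univ i)
    rwa [Set.indicator_of_mem hSl, wf_Sl hn] at this
  have h3 : qv n ≤ ∑ i : Fin n, Set.indicator s (wf n) (EL n i) := by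
    have := Finset.single_le_sum (f := fun i => Set.indicator s (wf n) (EL n i))
      (fun i _ => ind_nonneg hn s _) (Finset.mem_univ i)
    rwa [Set.indicator_of_mem hE, wf_EL hn] at this
  linarith

theorem bound2 (hn : 3 ≤ n) {s : Set (List (StdEx n))} (k : Fin n)
    (hE : ∀ m, m ≠ k → EL n m ∈ s) : 1 ≤ ∑ᶠ l ∈ s, wf n l := by
  rw [sum_formula hn]
  have h1 : (0:ℝ) ≤ Set.indicator s (wf n) (FmL n) := ind_nonneg hn s _
  have h2 : (0:ℝ) ≤ ∑ i : Fin n, Set.indicator s (wf n) (SlL n i) :=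
    Finset.sum_nonneg (fun i _ => ind_nonneg hn s _)
  have h3 : 1 ≤ ∑ i : Fin n, Set.indicator s (wf n) (EL n i) := by
    have hsub : ∑ i ∈ Finset.univ.erase k, Set.indicator s (wf n) (EL n i)
        ≤ ∑ i : Fin n, Set.indicator s (wf n) (EL n i) :=
      Finset.sum_le_sum_of_subset_of_nonneg (Finset.erase_subset _ _)
        (fun i _ _ => ind_nonneg hn s _)
    have heq : ∑ i ∈ Finset.univ.erase k, Set.indicator s (wf n) (EL n i)
        = ((n : ℝ) - 1) * qv n := by
      rw [Finset.sum_congr rfl (fun i hi => ?_)]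
      · rw [Finset.sum_const, Finset.card_erase_of_mem (Finset.mem_univ k),
          Finset.card_univ, Fintype.card_fin, nsmul_eq_mul]
        congr 1
        have h1n : 1 ≤ n := by omega
        push_cast [Nat.cast_sub h1n]
        ring
      · rw [Set.indicator_of_mem (hE i (Finset.ne_of_mem_erase hi)), wf_EL hn]
    rw [← qmul hn, ← heq]
    exact hsub
  linarith

/-! ### the LocalWeight and measure bound -/

noncomputable def Wgt (n : ℕ) (hn : 3 ≤ n) : LocalWeight (StdEx n) :=
  ⟨wf n, wf_nonneg hn, wf_le_one hn, wf_supp⟩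

theorem measure_le (hn : 3 ≤ n) (u : StdEx n) :
    localMeasure (Wgt n hn) u ≤ 3 - qv n := by
  have hq := qmul hn
  rw [localMeasure]
  show ∑ᶠ l ∈ {l : List (StdEx n) | IsPLE (StdEx n) l ∧ u ∈ l}, wf n l ≤ 3 - qv n
  rw [sum_formula hn]
  set s : Set (List (StdEx n)) := {l : List (StdEx n) | IsPLE (StdEx n) l ∧ u ∈ l} with hs
  have h1 : Set.indicator s (wf n) (FmL n) ≤ 1 - qv n := by
    calc Set.indicator s (wf n) (FmL n) ≤ wf n (FmL n) := ind_le hn s _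
    _ = 1 - qv n := wf_Fm
  have h3 : ∑ i : Fin n, Set.indicator s (wf n) (EL n i) ≤ (n : ℝ) * qv n := by
    calc ∑ i : Fin n, Set.indicator s (wf n) (EL n i)
        ≤ ∑ i : Fin n, qv n :=
          Finset.sum_le_sum (fun i _ => le_of_le_of_eq (ind_le hn s _) (wf_EL hn i))
      _ = (n : ℝ) * qv n := by
          rw [Finset.sum_const, Finset.card_univ, Fintype.card_fin, nsmul_eq_mul]
  have h2 : ∑ i : Fin n, Set.indicator s (wf n) (SlL n i) ≤ 1 - qv n := by
    obtain ⟨k, hk⟩ : ∃ k : Fin n, ∀ i : Fin n, i ≠ k → u ∉ SlL n i := by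
      cases u with
      | inl k => exact ⟨k, fun i hi hmem => hi ((av_mem_Sl_iff (i := i) (k := k)).1 hmem).symm⟩
      | inr k => exact ⟨k, fun i hi hmem => hi ((bv_mem_Sl_iff (i := i) (k := k)).1 hmem).symm⟩
    have : ∑ i : Fin n, Set.indicator s (wf n) (SlL n i)
        = Set.indicator s (wf n) (SlL n k) := by
      refine Finset.sum_eq_single_of_mem k (Finset.mem_univ k) (fun i _ hi => ?_)
      refine Set.indicator_of_notMem (fun hmem => ?_) _
      exact hk i hi hmem.2
    rw [this]
    calc Set.indicator s (wf n) (SlL n k) ≤ wf n (SlL n k) := ind_le hn s _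
      _ = 1 - qv n := wf_Sl hn k
  have hq3 : (n : ℝ) * qv n = 1 + qv n := by linarith
  linarith

/-! ### the realizer -/

theorem two_elems (hn : 3 ≤ n) (i : Fin n) : ∃ m : Fin n, m ≠ i := by
  by_cases h : i = ⟨0, by omega⟩
  · exact ⟨⟨1, by omega⟩, by subst h; intro hc; exact absurd (Fin.val_eq_of_eq hc) (by simp)⟩
  · exact ⟨⟨0, by omega⟩, fun hc => h hc.symm⟩

theorem realizer (hn : 3 ≤ n) : IsFLRealizer (Wgt n hn) := by
  constructor
  · intro u v huv
    show 1 ≤ ∑ᶠ l ∈ {l : List (StdEx n) | IsPLE (StdEx n) l ∧ pleLE l u v}, wf n l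
    cases u with
    | inl i =>
      cases v with
      | inl j =>
        have hij : i = j := le_inl_inl.1 huv
        subst hij
        exact bound1 hn ⟨isPLE_Fm, mem_Fm_av i, mem_Fm_av i, le_refl _⟩
          (i := i) ⟨isPLE_EL i, mem_EL_av i i, mem_EL_av i i, le_refl _⟩
      | inr j =>
        have hij : i ≠ j := le_inl_inr.1 huv
        exact bound1 hn ⟨isPLE_Fm, mem_Fm_av i, mem_Fm_bv j, (F_a_b i j).le⟩
          (i := i) ⟨isPLE_EL i, mem_EL_av i i, mem_EL_bv i j,
            (E_ai_bj (fun h => hij h.symm)).le⟩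
    | inr i =>
      cases v with
      | inl j => exact absurd huv (fun h => le_inr_inl.1 h)
      | inr j =>
        have hij : i = j := le_inr_inr.1 huv
        subst hij
        exact bound1 hn ⟨isPLE_Fm, mem_Fm_bv i, mem_Fm_bv i, le_refl _⟩
          (i := i) ⟨isPLE_EL i, mem_EL_bv i i, mem_EL_bv i i, le_refl _⟩
  · intro u v huv hvu
    show 1 ≤ ∑ᶠ l ∈ {l : List (StdEx n) | IsPLE (StdEx n) l ∧ pleLT l v u}, wf n l
    cases u with
    | inl i =>
      cases v with
      | inl j =>
        have hij : j ≠ i := fun h => huv (le_inl_inl.2 h.symm)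
        rcases lt_or_gt_of_ne hij with hlt | hgt
        · -- j < i : ascending lists give av j before av i
          refine bound2 hn j (fun m hm => ⟨isPLE_EL m, mem_EL_av m j, mem_EL_av m i, ?_⟩)
          by_cases hmi : m = i
          · subst hmi; exact E_ak_ai hij
          · exact E_ak_aj (fun h => hm h.symm) (fun h => hmi h.symm) hlt
        · -- i < j : use Fm (descending) and EL i
          exact bound1 hn ⟨isPLE_Fm, mem_Fm_av j, mem_Fm_av i, F_a_a hgt⟩
            (i := i) ⟨isPLE_EL i, mem_EL_av i j, mem_EL_av i i, E_ak_ai hij⟩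
      | inr j =>
        have hij : i = j := by
          by_contra h
          exact huv (le_inl_inr.2 h)
        subst hij
        exact bound3 hn ⟨isPLE_Sl i, mem_Sl_bv i, mem_Sl_av i, Sl_b_lt_a i⟩
          ⟨isPLE_EL i, mem_EL_bv i i, mem_EL_av i i, E_b_lt_a i⟩
    | inr i =>
      cases v with
      | inl j =>
        have hij : j = i := by
          by_contra h
          exact hvu (le_inl_inr.2 h)
        subst hij
        obtain ⟨m, hm⟩ := two_elems hn j
        exact bound1 hn ⟨isPLE_Fm, mem_Fm_av j, mem_Fm_bv j, F_a_b j j⟩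
          (i := m) ⟨isPLE_EL m, mem_EL_av m j, mem_EL_bv m j, E_ak_bj (fun h => hm h.symm) j⟩
      | inr j =>
        have hij : j ≠ i := fun h => huv (le_inr_inr.2 h.symm)
        rcases lt_or_gt_of_ne hij with hlt | hgt
        · -- j < i : ascending lists give bv j before bv i ; exclude EL i
          refine bound2 hn i (fun m hm => ⟨isPLE_EL m, mem_EL_bv m j, mem_EL_bv m i, ?_⟩)
          by_cases hmj : m = j
          · subst hmj; exact E_bi_bj (fun h => hm h.symm)
          · exact E_bk_bj (fun h => hmj h.symm) (fun h => hm h.symm) hlt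
        · -- i < j
          exact bound1 hn ⟨isPLE_Fm, mem_Fm_bv j, mem_Fm_bv i, F_b_b hgt⟩
            (i := j) ⟨isPLE_EL j, mem_EL_bv j j, mem_EL_bv j i, E_bi_bj (fun h => hij h.symm)⟩


theorem main (hn : 3 ≤ n) : fldim (StdEx n) < 3 := by
  have hne : Nonempty (StdEx n) := ⟨Sum.inl (⟨0, by omega⟩ : Fin n)⟩
  have hq := qv_pos hn
  have hmem : maxLocalMeasure (Wgt n hn) ∈
      {c : ℝ | ∃ W : LocalWeight (StdEx n), IsFLRealizer W ∧ maxLocalMeasure W = c} :=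
    ⟨Wgt n hn, realizer hn, rfl⟩
  have hbdd : BddBelow
      {c : ℝ | ∃ W : LocalWeight (StdEx n), IsFLRealizer W ∧ maxLocalMeasure W = c} := by
    refine ⟨0, fun c hc => ?_⟩
    rcases hc with ⟨W, _, rfl⟩
    obtain ⟨u0⟩ := hne
    have h0 : 0 ≤ localMeasure W u0 := by
      rw [localMeasure, finsum_mem_def]
      exact finsum_nonneg (fun l => Set.indicator_nonneg (fun l _ => W.nonneg l) l)
    have hba : BddAbove (Set.range (fun u : StdEx n => localMeasure W u)) :=
      (Set.finite_range _).bddAbove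
    exact le_trans h0 (le_ciSup hba u0)
  have hle : maxLocalMeasure (Wgt n hn) ≤ 3 - qv n := by
    show (⨆ u : StdEx n, localMeasure (Wgt n hn) u) ≤ 3 - qv n
    exact ciSup_le (fun u => measure_le hn u)
  have h1 : fldim (StdEx n) ≤ maxLocalMeasure (Wgt n hn) := csInf_le hbdd hmem
  linarith

end FLDaux

/-- For every n ≥ 3, fldim(S_n) < 3. -/
theorem fldim_standard_example_lt_three (n : ℕ) (hn : 3 ≤ n) :
    fldim (StdEx n) < 3 := by
  exact FLDaux.main hn
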